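/- Let L : (0,∞) → [0,∞) and ψ : (0,∞)² → [0,∞) be measurable. Define the reserve functions 𝒳(q) = ∫_q^∞ L(p)/p² dp and 𝒴(q) = ∫₀^q L(p)/p dp for q > 0. Then, with all integrals taken as Lebesgue integrals with values in [0,∞]: ∬_{(0,∞)²} ψ(p_X, p_Y)·(p_X·𝒳(p_X/p_Y) + p_Y·𝒴(p_X/p_Y)) dp_X dp_Y = ∫₀^∞ [ (L(p)/p²)·∬_{(0,∞)²} p_X·ψ(p_X, p_Y)·𝟙{p_X/p_Y ≤ p} dp_X dp_Y + (L(p)/p)·∬_{(0,∞)²} p_Y·ψ(p_X, p_Y)·𝟙{p_X/p_Y ≥ p} dp_X dp_Y ] dp. In particular, the expected future value of the CFMM's reserves under the belief ψ is a linear function of the values L(p). -/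

import Mathlib

open MeasureTheory Set
open scoped ENNReal

noncomputable section

/-- The open positive orthant of `ℝ²`, on which prices live. -/
def orth : Set (ℝ × ℝ) := Set.Ioi 0 ×ˢ Set.Ioi 0

/-- Reserve of asset `X` at spot exchange rate `q`: `𝒳(q) = ∫_q^∞ L(p)/p² dp`. -/
def XRes (L : ℝ → ℝ) (q : ℝ) : ℝ≥0∞ :=
  ∫⁻ p in Set.Ioi q, ENNReal.ofReal (L p / p ^ 2)

/-- Reserve of asset `Y` at spot exchange rate `q`: `𝒴(q) = ∫_0^q L(p)/p dp`. -/
def YRes (L : ℝ → ℝ) (q : ℝ) : ℝ≥0∞ :=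
  ∫⁻ p in Set.Ioc 0 q, ENNReal.ofReal (L p / p)

/-- The joint integrand: value contribution of liquidity at price `p` seen from price pair `q`. -/
def Fjoint (L : ℝ → ℝ) (ψ : ℝ × ℝ → ℝ) (q : ℝ × ℝ) (p : ℝ) : ℝ≥0∞ :=
  (if q.1 / q.2 < p then ENNReal.ofReal (L p / p ^ 2) * ENNReal.ofReal (q.1 * ψ q) else 0) +
  (if p ≤ q.1 / q.2 then ENNReal.ofReal (L p / p) * ENNReal.ofReal (q.2 * ψ q) else 0)

lemma orth_measurable : MeasurableSet orth :=
  (measurableSet_Ioi).prod measurableSet_Ioi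

/-- A line through the origin (or any line `x = p y`) is Lebesgue-null in the plane. -/
lemma line_null (p : ℝ) : volume {q : ℝ × ℝ | q.1 = p * q.2} = 0 := by
  have hs : MeasurableSet {q : ℝ × ℝ | q.1 = p * q.2} :=
    measurableSet_eq_fun measurable_fst (measurable_snd.const_mul p)
  rw [Measure.volume_eq_prod, Measure.prod_apply_symm hs]
  have : ∀ y : ℝ, ((fun x => (x, y)) ⁻¹' {q : ℝ × ℝ | q.1 = p * q.2}) = {p * y} := by
    intro y; ext x; simp [Set.mem_preimage, Set.mem_singleton_iff]
  simp only [this]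
  simp [Real.volume_singleton]

lemma Fjoint_measurable (L : ℝ → ℝ) (ψ : ℝ × ℝ → ℝ)
    (hLmeas : Measurable L) (hψmeas : Measurable ψ) :
    Measurable (Function.uncurry (Fjoint L ψ)) := by
  have hdiv : Measurable fun x : (ℝ × ℝ) × ℝ => x.1.1 / x.1.2 :=
    (measurable_fst.fst).div (measurable_fst.snd)
  have h1 : Measurable fun x : (ℝ × ℝ) × ℝ =>
      ENNReal.ofReal (L x.2 / x.2 ^ 2) * ENNReal.ofReal (x.1.1 * ψ x.1) :=
    (ENNReal.measurable_ofReal.comp ((hLmeas.comp measurable_snd).div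
      ((measurable_snd.pow_const 2)))).mul
      (ENNReal.measurable_ofReal.comp ((measurable_fst.fst).mul (hψmeas.comp measurable_fst)))
  have h2 : Measurable fun x : (ℝ × ℝ) × ℝ =>
      ENNReal.ofReal (L x.2 / x.2) * ENNReal.ofReal (x.1.2 * ψ x.1) :=
    (ENNReal.measurable_ofReal.comp ((hLmeas.comp measurable_snd).div measurable_snd)).mul
      (ENNReal.measurable_ofReal.comp ((measurable_fst.snd).mul (hψmeas.comp measurable_fst)))
  exact ((Measurable.ite (measurableSet_lt hdiv measurable_snd) h1 measurable_const)).add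
    ((Measurable.ite (measurableSet_le measurable_snd hdiv) h2 measurable_const))

theorem stmt_17 (L : ℝ → ℝ) (ψ : ℝ × ℝ → ℝ)
    (hLmeas : Measurable L) (hLnn : ∀ p ∈ Set.Ioi (0:ℝ), 0 ≤ L p)
    (hψmeas : Measurable ψ) (hψnn : ∀ q, 0 ≤ ψ q) :
    (∫⁻ q in orth,
        ENNReal.ofReal (ψ q) *
          (ENNReal.ofReal q.1 * XRes L (q.1 / q.2) +
           ENNReal.ofReal q.2 * YRes L (q.1 / q.2)))
      = ∫⁻ p in Set.Ioi (0:ℝ),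
          (ENNReal.ofReal (L p / p ^ 2) *
              (∫⁻ q in {q : ℝ × ℝ | q ∈ orth ∧ q.1 / q.2 ≤ p},
                ENNReal.ofReal (q.1 * ψ q)) +
           ENNReal.ofReal (L p / p) *
              (∫⁻ q in {q : ℝ × ℝ | q ∈ orth ∧ p ≤ q.1 / q.2},
                ENNReal.ofReal (q.2 * ψ q))) := by
  have hF := Fjoint_measurable L ψ hLmeas hψmeas
  have hm1 : Measurable fun p : ℝ => ENNReal.ofReal (L p / p ^ 2) :=
    ENNReal.measurable_ofReal.comp (hLmeas.div (measurable_id.pow_const 2))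
  have hm2 : Measurable fun p : ℝ => ENNReal.ofReal (L p / p) :=
    ENNReal.measurable_ofReal.comp (hLmeas.div measurable_id)
  -- Step 1: rewrite the LHS integrand as an inner integral over p.
  have step1 : (∫⁻ q in orth,
        ENNReal.ofReal (ψ q) *
          (ENNReal.ofReal q.1 * XRes L (q.1 / q.2) +
           ENNReal.ofReal q.2 * YRes L (q.1 / q.2)))
      = ∫⁻ q in orth, ∫⁻ p in Set.Ioi (0:ℝ), Fjoint L ψ q p := by
    refine setLIntegral_congr_fun orth_measurable ?_
    rintro ⟨x, y⟩ ⟨hx, hy⟩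
    simp only [Set.mem_Ioi] at hx hy
    have ha : 0 ≤ x / y := le_of_lt (div_pos hx hy)
    have key : ∀ p : ℝ, Fjoint L ψ (x, y) p =
        (Set.Ioi (x / y)).indicator
          (fun p => ENNReal.ofReal (L p / p ^ 2) * ENNReal.ofReal (x * ψ (x, y))) p +
        (Set.Iic (x / y)).indicator
          (fun p => ENNReal.ofReal (L p / p) * ENNReal.ofReal (y * ψ (x, y))) p := by
      intro p
      simp [Fjoint, Set.indicator_apply]
    simp only [key]
    rw [lintegral_add_left (f := (Set.Ioi (x / y)).indicator fun p : ℝ =>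
      ENNReal.ofReal (L p / p ^ 2) * ENNReal.ofReal (x * ψ (x, y)))
      ((hm1.mul measurable_const).indicator measurableSet_Ioi)]
    rw [lintegral_indicator measurableSet_Ioi, lintegral_indicator measurableSet_Iic,
      Measure.restrict_restrict measurableSet_Ioi,
      Measure.restrict_restrict measurableSet_Iic,
      Set.Ioi_inter_Ioi, Set.Iic_inter_Ioi]
    have hmax : (x / y) ⊔ (0:ℝ) = x / y := sup_eq_left.mpr ha
    rw [hmax]
    rw [lintegral_mul_const' _ _ ENNReal.ofReal_ne_top,
      lintegral_mul_const' _ _ ENNReal.ofReal_ne_top]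
    rw [ENNReal.ofReal_mul (le_of_lt hx), ENNReal.ofReal_mul (le_of_lt hy)]
    show ENNReal.ofReal (ψ (x, y)) *
        (ENNReal.ofReal x * XRes L (x / y) + ENNReal.ofReal y * YRes L (x / y)) = _
    unfold XRes YRes
    ring
  rw [step1]
  -- Step 2: Tonelli.
  rw [lintegral_lintegral_swap (hF.aemeasurable)]
  -- Step 3: compute the inner integral over q for fixed p > 0.
  refine setLIntegral_congr_fun measurableSet_Ioi ?_
  intro p hp
  simp only [Set.mem_Ioi] at hp
  have hsetlt : MeasurableSet {q : ℝ × ℝ | q.1 / q.2 < p} :=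
    measurableSet_lt (measurable_fst.div measurable_snd) measurable_const
  have hsetle : MeasurableSet {q : ℝ × ℝ | p ≤ q.1 / q.2} :=
    measurableSet_le measurable_const (measurable_fst.div measurable_snd)
  have hg1 : Measurable fun q : ℝ × ℝ => ENNReal.ofReal (q.1 * ψ q) :=
    ENNReal.measurable_ofReal.comp (measurable_fst.mul hψmeas)
  have hg2 : Measurable fun q : ℝ × ℝ => ENNReal.ofReal (q.2 * ψ q) :=
    ENNReal.measurable_ofReal.comp (measurable_snd.mul hψmeas)
  have key : ∀ q : ℝ × ℝ, Fjoint L ψ q p =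
      ({q : ℝ × ℝ | q.1 / q.2 < p}).indicator
        (fun q => ENNReal.ofReal (L p / p ^ 2) * ENNReal.ofReal (q.1 * ψ q)) q +
      ({q : ℝ × ℝ | p ≤ q.1 / q.2}).indicator
        (fun q => ENNReal.ofReal (L p / p) * ENNReal.ofReal (q.2 * ψ q)) q := by
    intro q
    simp [Fjoint, Set.indicator_apply]
  simp only [key]
  rw [lintegral_add_left (f := ({q : ℝ × ℝ | q.1 / q.2 < p}).indicator fun q : ℝ × ℝ =>
    ENNReal.ofReal (L p / p ^ 2) * ENNReal.ofReal (q.1 * ψ q))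
    (((measurable_const.mul hg1)).indicator hsetlt)]
  rw [lintegral_indicator hsetlt, lintegral_indicator hsetle,
    Measure.restrict_restrict hsetlt, Measure.restrict_restrict hsetle]
  rw [lintegral_const_mul' _ _ ENNReal.ofReal_ne_top,
    lintegral_const_mul' _ _ ENNReal.ofReal_ne_top]
  congr 2
  · -- a.e. set equality: strict vs non-strict inequality
    refine setLIntegral_congr ?_
    rw [MeasureTheory.ae_eq_set]
    have hsub : {q : ℝ × ℝ | q.1 / q.2 < p} ∩ orth ⊆ {q : ℝ × ℝ | q ∈ orth ∧ q.1 / q.2 ≤ p} := by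
      rintro q ⟨hlt, ho⟩
      exact ⟨ho, le_of_lt hlt⟩
    refine ⟨by rw [Set.diff_eq_empty.mpr hsub]; exact measure_empty, ?_⟩
    refine measure_mono_null ?_ (line_null p)
    rintro ⟨x, y⟩ ⟨⟨⟨hx, hy⟩, hle⟩, hn⟩
    simp only [Set.mem_inter_iff, Set.mem_setOf_eq, not_and] at hn
    have heq : x / y = p := le_antisymm hle (not_lt.mp (fun h => hn h ⟨hx, hy⟩))
    simp only [Set.mem_setOf_eq]
    have hy' : (y : ℝ) ≠ 0 := ne_of_gt hy
    field_simp at heq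
    linarith [heq]
  · have hset : {q : ℝ × ℝ | p ≤ q.1 / q.2} ∩ orth = {q : ℝ × ℝ | q ∈ orth ∧ p ≤ q.1 / q.2} := by
      ext q; simp only [Set.mem_inter_iff, Set.mem_setOf_eq]; tauto
    rw [hset]
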